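/- Let K be a formally real field of characteristic not 2. Then the set of nonzero sums of squares of K together with 0 is a preordering of K and equals the intersection of all orderings of K. -/

import Mathlib

/-- A preordering of a field `K`: additively and multiplicatively closed,
contains all squares, and does not contain `-1`. -/
def IsPreordering (K : Type*) [Field K] (T : Set K) : Prop :=
  (∀ x ∈ T, ∀ y ∈ T, x + y ∈ T) ∧ (∀ x ∈ T, ∀ y ∈ T, x * y ∈ T) ∧
    (∀ x : K, x ^ 2 ∈ T) ∧ (-1 : K) ∉ T

/-- An ordering of a field `K`: additively and multiplicatively closed,
with `P ∪ -P = K` and `P ∩ -P = {0}`. -/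
def IsOrdering (K : Type*) [Field K] (P : Set K) : Prop :=
  (∀ x ∈ P, ∀ y ∈ P, x + y ∈ P) ∧ (∀ x ∈ P, ∀ y ∈ P, x * y ∈ P) ∧
    (∀ x : K, x ∈ P ∨ -x ∈ P) ∧ (∀ x : K, x ∈ P → -x ∈ P → x = 0)

section Aux

variable {K : Type*} [Field K]

lemma aux_sq_mul_isSumSq {a S : K} (hS : IsSumSq S) : IsSumSq (a ^ 2 * S) := by
  induction hS with
  | zero => simpa using IsSumSq.zero
  | @sq_add b T _ ih =>
      have : a ^ 2 * (b * b + T) = (a * b) * (a * b) + a ^ 2 * T := by ring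
      rw [this]; exact IsSumSq.sq_add _ ih

lemma aux_isSumSq_mul {S T : K} (hS : IsSumSq S) (hT : IsSumSq T) : IsSumSq (S * T) := by
  induction hS with
  | zero => simpa using IsSumSq.zero
  | @sq_add b S' _ ih =>
      have : (b * b + S') * T = b ^ 2 * T + S' * T := by ring
      rw [this]
      exact IsSumSq.add (aux_sq_mul_isSumSq hT) ih

/-- Every ordering contains all sums of squares. -/
lemma aux_sumSq_mem_ordering {P : Set K} (hP : IsOrdering K P) {x : K} (hx : IsSumSq x) :
    x ∈ P := by
  obtain ⟨hadd, hmul, htot, _⟩ := hP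
  have hsq : ∀ a : K, a * a ∈ P := by
    intro a
    rcases htot a with h | h
    · exact hmul a h a h
    · have := hmul _ h _ h
      simpa [neg_mul_neg] using this
  induction hx with
  | zero => simpa using hsq 0
  | @sq_add a S _ ih => exact hadd _ (hsq a) _ ih

lemma aux_neg_one_not_mem_ordering {P : Set K} (hP : IsOrdering K P) : (-1 : K) ∉ P := by
  intro h
  have h1 : (1 : K) ∈ P := by simpa using aux_sumSq_mem_ordering hP (by
    simpa using IsSumSq.sq_add (1 : K) IsSumSq.zero)
  have := hP.2.2.2 1 h1 h
  exact one_ne_zero this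

/-- The extension of a set by an element. -/
def extSet (T : Set K) (a : K) : Set K := {y | ∃ p ∈ T, ∃ q ∈ T, y = p + a * q}

lemma aux_ext_preordering {T : Set K} (hT : IsPreordering K T) (a : K)
    (h1 : (-1 : K) ∉ extSet T a) : IsPreordering K (extSet T a) := by
  obtain ⟨hadd, hmul, hsq, _⟩ := hT
  refine ⟨?_, ?_, ?_, h1⟩
  · rintro x ⟨p, hp, q, hq, rfl⟩ y ⟨p', hp', q', hq', rfl⟩
    exact ⟨p + p', hadd _ hp _ hp', q + q', hadd _ hq _ hq', by ring⟩
  · rintro x ⟨p, hp, q, hq, rfl⟩ y ⟨p', hp', q', hq', rfl⟩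
    refine ⟨p * p' + a ^ 2 * (q * q'),
      hadd _ (hmul _ hp _ hp') _ (hmul _ (hsq a) _ (hmul _ hq _ hq')),
      p * q' + p' * q, hadd _ (hmul _ hp _ hq') _ (hmul _ hp' _ hq), by ring⟩
  · intro x
    exact ⟨x ^ 2, hsq x, 0, by simpa using hsq 0, by ring⟩

lemma aux_mem_ext (T : Set K) (hT : IsPreordering K T) (a : K) : a ∈ extSet T a :=
  ⟨0, by simpa using hT.2.2.1 0, 1, by simpa using hT.2.2.1 1, by ring⟩

lemma aux_subset_ext (T : Set K) (hT : IsPreordering K T) (a : K) : T ⊆ extSet T a :=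
  fun p hp => ⟨p, hp, 0, by simpa using hT.2.2.1 0, by ring⟩

/-- If `-1 ∈ T + aT` for a preordering `T`, then `-a ∈ T`. -/
lemma aux_neg_mem {T : Set K} (hT : IsPreordering K T) {a : K}
    (h : (-1 : K) ∈ extSet T a) : -a ∈ T := by
  obtain ⟨hadd, hmul, hsq, hno⟩ := hT
  obtain ⟨p, hp, q, hq, hpq⟩ := h
  by_cases hq0 : q = 0
  · exact absurd (by rw [hpq, hq0]; simpa using hp) hno
  · have h1 : (1 : K) ∈ T := by simpa using hsq 1
    have key : -a = (1 + p) * q * (q⁻¹) ^ 2 := by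
      field_simp
      have : a * q = -(1 + p) := by linear_combination -hpq
      linear_combination (-1 : K) * this
    rw [key]
    exact hmul _ (hmul _ (hadd _ h1 _ hp) _ hq) _ (hsq q⁻¹)

/-- A maximal preordering is an ordering. -/
lemma aux_maximal_is_ordering {P : Set K} (hP : IsPreordering K P)
    (hmax : ∀ Q : Set K, IsPreordering K Q → P ⊆ Q → Q = P) : IsOrdering K P := by
  obtain ⟨hadd, hmul, hsq, hno⟩ := hP
  have htot : ∀ x : K, x ∈ P ∨ -x ∈ P := by
    intro x
    by_cases hx : x ∈ P
    · exact Or.inl hx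
    · right
      by_cases h1 : (-1 : K) ∈ extSet P x
      · exact aux_neg_mem ⟨hadd, hmul, hsq, hno⟩ h1
      · exfalso
        have hpre := aux_ext_preordering ⟨hadd, hmul, hsq, hno⟩ x h1
        have heq := hmax _ hpre (aux_subset_ext P ⟨hadd, hmul, hsq, hno⟩ x)
        exact hx (heq ▸ aux_mem_ext P ⟨hadd, hmul, hsq, hno⟩ x)
  refine ⟨hadd, hmul, htot, ?_⟩
  intro x hx hnx
  by_contra hx0
  have heq : (-1 : K) = x * -x * (x⁻¹) ^ 2 := by field_simp
  exact hno (heq ▸ hmul _ (hmul _ hx _ hnx) _ (hsq x⁻¹))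

/-- Every preordering is contained in an ordering (Zorn). -/
lemma aux_exists_ordering {T : Set K} (hT : IsPreordering K T) :
    ∃ P : Set K, IsOrdering K P ∧ T ⊆ P := by
  obtain ⟨P, hTP0, hPmax⟩ := zorn_subset_nonempty
      {Q : Set K | IsPreordering K Q ∧ T ⊆ Q}
      (fun c hc hchain hne => by
        refine ⟨⋃₀ c, ⟨⟨?_, ?_, ?_, ?_⟩, ?_⟩, fun Q hQ => Set.subset_sUnion_of_mem hQ⟩
        · rintro x ⟨Q, hQ, hxQ⟩ y ⟨Q', hQ', hyQ'⟩
          rcases hchain.total hQ hQ' with h | h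
          · exact ⟨Q', hQ', (hc hQ').1.1 x (h hxQ) y hyQ'⟩
          · exact ⟨Q, hQ, (hc hQ).1.1 x hxQ y (h hyQ')⟩
        · rintro x ⟨Q, hQ, hxQ⟩ y ⟨Q', hQ', hyQ'⟩
          rcases hchain.total hQ hQ' with h | h
          · exact ⟨Q', hQ', (hc hQ').1.2.1 x (h hxQ) y hyQ'⟩
          · exact ⟨Q, hQ, (hc hQ).1.2.1 x hxQ y (h hyQ')⟩
        · intro x
          obtain ⟨Q, hQ⟩ := hne
          exact ⟨Q, hQ, (hc hQ).1.2.2.1 x⟩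
        · rintro ⟨Q, hQ, hxQ⟩
          exact (hc hQ).1.2.2.2 hxQ
        · obtain ⟨Q, hQ⟩ := hne
          exact (hc hQ).2.trans (Set.subset_sUnion_of_mem hQ)) T ⟨hT, subset_rfl⟩
  obtain ⟨hPpre, hTP⟩ := hPmax.prop
  refine ⟨P, aux_maximal_is_ordering hPpre ?_, hTP⟩
  intro Q hQ hPQ
  exact Set.Subset.antisymm (hPmax.2 ⟨hQ, hTP.trans hPQ⟩ hPQ) hPQ

end Aux

/-- In a formally real field the set of sums of squares (i.e. the nonzero sums of
squares together with 0) is a preordering and is the intersection of all orderings. -/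
theorem sumSq_isPreordering_and_eq_iInter_orderings
    (K : Type*) [Field K] (hK : ringChar K ≠ 2)
    (hreal : ∃ P : Set K, IsOrdering K P) :
    IsPreordering K {x : K | IsSumSq x} ∧
      {x : K | IsSumSq x} = ⋂ P ∈ {P : Set K | IsOrdering K P}, P := by
  obtain ⟨P₀, hP₀⟩ := hreal
  have hno : (-1 : K) ∉ {x : K | IsSumSq x} := fun h =>
    aux_neg_one_not_mem_ordering hP₀ (aux_sumSq_mem_ordering hP₀ h)
  have hpre : IsPreordering K {x : K | IsSumSq x} := by
    refine ⟨fun x hx y hy => IsSumSq.add hx hy, fun x hx y hy => aux_isSumSq_mul hx hy,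
      fun x => ?_, hno⟩
    show IsSumSq (x ^ 2)
    have : x ^ 2 = x * x + 0 := by ring
    rw [this]; exact IsSumSq.sq_add x IsSumSq.zero
  refine ⟨hpre, ?_⟩
  apply Set.Subset.antisymm
  · intro x hx
    simp only [Set.mem_iInter]
    intro P hP
    exact aux_sumSq_mem_ordering hP hx
  · intro x hx
    simp only [Set.mem_iInter] at hx
    by_contra hxs
    have h1 : (-1 : K) ∉ extSet {x : K | IsSumSq x} (-x) := by
      intro h
      have := aux_neg_mem hpre h
      simpa using hxs (by simpa using this)
    have hpre' := aux_ext_preordering hpre (-x) h1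
    obtain ⟨P, hP, hTP⟩ := aux_exists_ordering hpre'
    have hmem : -x ∈ P := hTP (aux_mem_ext _ hpre (-x))
    have hxP : x ∈ P := hx P hP
    have := hP.2.2.2 x hxP hmem
    exact hxs (by simpa [this] using IsSumSq.zero)
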